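/- For any monomial ideal I in a polynomial ring R over a field and any monomial f, the colon ideal (I : f) is again a monomial ideal, and dim(R/I) = max{dim(R/(I:f)), dim(R/⟨I,f⟩)}. -/

import Mathlib

open MvPolynomial

noncomputable section

/-- The depth of a ring `A` with respect to an ideal `m`: the supremum of lengths of
regular sequences on `A` consisting of elements of `m`. -/
def ringDepth (A : Type*) [CommRing A] (m : Ideal A) : ℕ∞ :=
  sSup {d : ℕ∞ | ∃ l : List A, (∀ r ∈ l, r ∈ m) ∧
    RingTheory.Sequence.IsRegular A l ∧ d = l.length}

/-- The graded maximal ideal of a polynomial ring, generated by all variables. -/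
def mvMaxIdeal (K : Type*) [Field K] (σ : Type*) : Ideal (MvPolynomial σ K) :=
  Ideal.span (Set.range (X : σ → MvPolynomial σ K))

/-- The depth of the quotient of a polynomial ring by an ideal, with respect to the image of
the graded maximal ideal. -/
def quotDepth {K : Type*} [Field K] {σ : Type*} (I : Ideal (MvPolynomial σ K)) : ℕ∞ :=
  ringDepth (MvPolynomial σ K ⧸ I) ((mvMaxIdeal K σ).map (Ideal.Quotient.mk I))

/-- An ideal `I` of a polynomial ring is Cohen-Macaulay if `depth = Krull dimension`
for the quotient ring. -/
def IsCM {K : Type*} [Field K] {σ : Type*} (I : Ideal (MvPolynomial σ K)) : Prop :=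
  (quotDepth I : WithBot ℕ∞) = ringKrullDim (MvPolynomial σ K ⧸ I)

/-- The height of an ideal: the infimum of heights of primes containing it. -/
def idealHeight {A : Type*} [CommRing A] (I : Ideal A) : ℕ∞ :=
  sInf {h : ℕ∞ | ∃ p : PrimeSpectrum A, I ≤ p.asIdeal ∧ Order.height p = h}

/-- An ideal is unmixed if all of its minimal primes have the same height. -/
def IsUnmixed {A : Type*} [CommRing A] (I : Ideal A) : Prop :=
  ∀ p ∈ I.minimalPrimes, ∀ q ∈ I.minimalPrimes, idealHeight p = idealHeight q

/-- The binomial edge ideal of a graph `G`, in `K[x_i, y_i : i ∈ V(G)]`, where `x_i`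
corresponds to `Sum.inl i` and `y_i` to `Sum.inr i`. -/
def beIdeal (K : Type*) [Field K] {V : Type*} (G : SimpleGraph V) :
    Ideal (MvPolynomial (V ⊕ V) K) :=
  Ideal.span {f | ∃ i j, G.Adj i j ∧
    f = X (Sum.inl i) * X (Sum.inr j) - X (Sum.inl j) * X (Sum.inr i)}

/-- The number of connected components of a graph. -/
def numComp {V : Type*} (G : SimpleGraph V) : ℕ := Nat.card G.ConnectedComponent

/-- `c_G(T)`: the number of connected components of `G \ T`. -/
def compCount {n : ℕ} (G : SimpleGraph (Fin n)) (T : Finset (Fin n)) : ℕ :=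
  numComp (G.induce ((↑T : Set (Fin n))ᶜ))

/-- `T` is a cutset of `G`: every `t ∈ T` is a cut vertex of `G \ (T \ {t})`. -/
def IsCutset {n : ℕ} (G : SimpleGraph (Fin n)) (T : Finset (Fin n)) : Prop :=
  ∀ t ∈ T, compCount G (T.erase t) < compCount G T

/-- `v` is a cut vertex of `G`: its removal increases the number of connected components. -/
def IsCutVertex {V : Type*} (G : SimpleGraph V) (v : V) : Prop :=
  numComp G < numComp (G.induce ({v}ᶜ : Set V))

/-- `v` is a free (simplicial) vertex of `G`: its neighbourhood induces a complete graph. -/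
def IsFreeVertex {V : Type*} (G : SimpleGraph V) (v : V) : Prop :=
  ∀ a b, G.Adj v a → G.Adj v b → a ≠ b → G.Adj a b

/-- `G_v`: the graph `G` with all edges added between distinct neighbours of `v`. -/
def nbhdComplete {V : Type*} (G : SimpleGraph V) (v : V) : SimpleGraph V where
  Adj i j := G.Adj i j ∨ (i ≠ j ∧ G.Adj v i ∧ G.Adj v j)
  symm := by
    constructor
    intro a b h
    rcases h with h | ⟨hne, h1, h2⟩
    · exact Or.inl h.symm
    · exact Or.inr ⟨hne.symm, h2, h1⟩
  loopless := by
    constructor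
    intro a h
    rcases h with h | ⟨hne, _, _⟩
    · exact G.irrefl h
    · exact hne rfl

/-- The graph obtained from `G` by attaching a whisker (pendant vertex `none`) at `v`. -/
def addWhisker {V : Type*} (G : SimpleGraph V) (v : V) : SimpleGraph (Option V) where
  Adj a b := (∃ i j, a = some i ∧ b = some j ∧ G.Adj i j) ∨
    (a = none ∧ b = some v) ∨ (a = some v ∧ b = none)
  symm := by
    constructor
    intro a b h
    rcases h with ⟨i, j, ha, hb, hadj⟩ | ⟨ha, hb⟩ | ⟨ha, hb⟩
    · exact Or.inl ⟨j, i, hb, ha, hadj.symm⟩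
    · exact Or.inr (Or.inr ⟨hb, ha⟩)
    · exact Or.inr (Or.inl ⟨hb, ha⟩)
  loopless := by
    constructor
    intro a h
    rcases h with ⟨i, j, ha, hb, hadj⟩ | ⟨ha, hb⟩ | ⟨ha, hb⟩
    · obtain rfl : i = j := Option.some.inj (ha.symm.trans hb)
      exact G.irrefl hadj
    · cases ha ▸ hb
    · cases hb ▸ ha


/-- A (monic) monomial in a polynomial ring. -/
def IsMonomial {K : Type*} [Field K] {σ : Type*} (f : MvPolynomial σ K) : Prop :=
  ∃ d : σ →₀ ℕ, f = monomial d 1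

/-- A monomial ideal: an ideal generated by a set of monomials. -/
def IsMonomialIdeal {K : Type*} [Field K] {σ : Type*} (I : Ideal (MvPolynomial σ K)) : Prop :=
  ∃ S : Set (MvPolynomial σ K), (∀ f ∈ S, IsMonomial f) ∧ I = Ideal.span S

/-- The rank of a variable in the order `x₁ > ⋯ > xₙ > y₁ > ⋯ > yₙ`
(smaller rank = bigger variable). -/
def varRank {n : ℕ} : Fin n ⊕ Fin n → ℕ
  | Sum.inl i => (i : ℕ)
  | Sum.inr i => n + (i : ℕ)

/-- Lexicographic comparison of exponent vectors induced by `x₁ > ⋯ > xₙ > y₁ > ⋯ > yₙ`: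
`d` is lex-smaller than `e`. -/
def lexLt {n : ℕ} (d e : (Fin n ⊕ Fin n) →₀ ℕ) : Prop :=
  ∃ s, (∀ t, varRank t < varRank s → d t = e t) ∧ d s < e s

/-- The initial ideal of `I` with respect to the lexicographic order induced by
`x₁ > ⋯ > xₙ > y₁ > ⋯ > yₙ`: generated by leading monomials of nonzero elements of `I`. -/
def initialIdeal {K : Type*} [Field K] {n : ℕ}
    (I : Ideal (MvPolynomial (Fin n ⊕ Fin n) K)) : Ideal (MvPolynomial (Fin n ⊕ Fin n) K) :=
  Ideal.span {m | ∃ f ∈ I, ∃ d ∈ f.support,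
    (∀ e ∈ f.support, e ≠ d → lexLt e d) ∧ m = monomial d 1}

/-- `i` and `j` lie outside `T` and in the same connected component of `G \ T`. -/
def sameComp {n : ℕ} (G : SimpleGraph (Fin n)) (T : Finset (Fin n)) (i j : Fin n) : Prop :=
  ∃ (hi : i ∈ ((↑T : Set (Fin n))ᶜ)) (hj : j ∈ ((↑T : Set (Fin n))ᶜ)),
    (G.induce ((↑T : Set (Fin n))ᶜ)).Reachable ⟨i, hi⟩ ⟨j, hj⟩

/-- The minimal prime `P_T(G)` of the binomial edge ideal: generated by the variables
indexed by `T` together with the binomial edge ideals of the complete graphs on the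
connected components of `G \ T`. -/
def PT (K : Type*) [Field K] {n : ℕ} (G : SimpleGraph (Fin n)) (T : Finset (Fin n)) :
    Ideal (MvPolynomial (Fin n ⊕ Fin n) K) :=
  Ideal.span ({f | ∃ i ∈ T, f = X (Sum.inl i) ∨ f = X (Sum.inr i)} ∪
    {f | ∃ i j, i ≠ j ∧ sameComp G T i j ∧
      f = X (Sum.inl i) * X (Sum.inr j) - X (Sum.inl j) * X (Sum.inr i)})

/-- `vc` is a choice of one vertex in each connected component of `G \ T` (encoded as a
function assigning to each vertex outside `T` the chosen vertex of its component). -/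
def IsCompChoice {n : ℕ} (G : SimpleGraph (Fin n)) (T : Finset (Fin n))
    (vc : Fin n → Fin n) : Prop :=
  (∀ i, i ∉ T → sameComp G T i (vc i)) ∧ (∀ i j, sameComp G T i j → vc i = vc j)

/-- The monomial prime `P_T(v)` associated to a cutset `T` and a choice `vc` of one
vertex in each component of `G \ T`. -/
def PTv (K : Type*) [Field K] {n : ℕ} (G : SimpleGraph (Fin n)) (T : Finset (Fin n))
    (vc : Fin n → Fin n) : Ideal (MvPolynomial (Fin n ⊕ Fin n) K) :=
  Ideal.span ({f | ∃ i ∈ T, f = X (Sum.inl i) ∨ f = X (Sum.inr i)} ∪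
    {f | ∃ i : Fin n, i ∉ T ∧ i < vc i ∧ f = X (Sum.inl i)} ∪
    {f | ∃ j : Fin n, j ∉ T ∧ vc j < j ∧ f = X (Sum.inr j)})

/-- A block of `G`: a maximal connected induced subgraph without cut vertices. -/
def IsBlock {n : ℕ} (G : SimpleGraph (Fin n)) (B : Set (Fin n)) : Prop :=
  (G.induce B).Connected ∧ (∀ w : B, ¬ IsCutVertex (G.induce B) w) ∧
    ∀ B' : Set (Fin n), B ⊆ B' → (G.induce B').Connected →
      (∀ w : B', ¬ IsCutVertex (G.induce B') w) → B' = B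

/-- The block-with-whiskers `B̄`: the induced graph on the block `B` together with one
whisker attached at each cut vertex of `G` lying in `B`. -/
def blockWhisker {n : ℕ} (G : SimpleGraph (Fin n)) (B : Set (Fin n)) :
    SimpleGraph (↥B ⊕ {w : Fin n // w ∈ B ∧ IsCutVertex G w}) where
  Adj a b := (∃ i j, a = Sum.inl i ∧ b = Sum.inl j ∧ G.Adj i j) ∨
    (∃ i c, a = Sum.inl i ∧ b = Sum.inr c ∧ (i : Fin n) = (c : Fin n)) ∨
    (∃ i c, a = Sum.inr c ∧ b = Sum.inl i ∧ (i : Fin n) = (c : Fin n))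
  symm := by
    constructor
    intro a b h
    rcases h with ⟨i, j, ha, hb, hadj⟩ | ⟨i, c, ha, hb, hic⟩ | ⟨i, c, ha, hb, hic⟩
    · exact Or.inl ⟨j, i, hb, ha, hadj.symm⟩
    · exact Or.inr (Or.inr ⟨i, c, hb, ha, hic⟩)
    · exact Or.inr (Or.inl ⟨i, c, hb, ha, hic⟩)
  loopless := by
    constructor
    intro a h
    rcases h with ⟨i, j, ha, hb, hadj⟩ | ⟨i, c, ha, hb, _⟩ | ⟨i, c, ha, hb, _⟩
    · obtain rfl : i = j := Sum.inl.inj (ha.symm.trans hb)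
      exact G.irrefl hadj
    · cases ha.symm.trans hb
    · cases ha.symm.trans hb

/-- A graph is accessible if its binomial edge ideal is unmixed and every nonempty
cutset `T` contains a vertex `t` with `T \ {t}` again a cutset. -/
def Accessible (K : Type*) [Field K] {n : ℕ} (G : SimpleGraph (Fin n)) : Prop :=
  IsUnmixed (beIdeal K G) ∧
    ∀ T : Finset (Fin n), IsCutset G T → T.Nonempty → ∃ t ∈ T, IsCutset G (T.erase t)

section Aux

open Order

/-- Membership in an ideal spanned by monomials. -/
lemma mem_span_monomials {K : Type*} [Field K] {σ : Type*} (S : Set (σ →₀ ℕ))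
    (p : MvPolynomial σ K) :
    p ∈ Ideal.span ((fun d => (monomial d (1 : K))) '' S) ↔
      ∀ d ∈ p.support, ∃ e ∈ S, e ≤ d := by
  classical
  constructor
  · intro hp
    refine Submodule.span_induction ?_ ?_ ?_ ?_ hp
    · rintro x ⟨e, heS, rfl⟩ d hd
      rw [MvPolynomial.support_monomial] at hd
      simp only [one_ne_zero, if_false, Finset.mem_singleton] at hd
      exact ⟨e, heS, hd ▸ le_rfl⟩
    · intro d hd
      simp at hd
    · intro x y hx hy ihx ihy d hd
      rcases Finset.mem_union.mp (MvPolynomial.support_add hd) with h | h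
      · exact ihx d h
      · exact ihy d h
    · intro r x hx ih d hd
      have : d ∈ (r * x).support := by simpa [smul_eq_mul] using hd
      rcases Finset.mem_add.mp (MvPolynomial.support_mul r x this) with ⟨a, ha, b, hb, rfl⟩
      obtain ⟨e, heS, he⟩ := ih b hb
      exact ⟨e, heS, he.trans le_add_self⟩
  · intro h
    rw [MvPolynomial.as_sum p]
    refine Ideal.sum_mem _ fun d hd => ?_
    obtain ⟨e, heS, hed⟩ := h d hd
    have : (monomial d) (coeff d p) = monomial e 1 * monomial (d - e) (coeff d p) := by
      rw [monomial_mul, one_mul, add_tsub_cancel_of_le hed]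
    rw [this]
    exact Ideal.mul_mem_right _ _ (Ideal.subset_span ⟨e, heS, rfl⟩)

lemma colon_span_monomials {K : Type*} [Field K] {σ : Type*} (S : Set (σ →₀ ℕ)) (ε : σ →₀ ℕ) :
    Submodule.colon (Ideal.span ((fun d => (monomial d (1 : K))) '' S))
        (Ideal.span {(monomial ε 1 : MvPolynomial σ K)}) =
      Ideal.span ((fun d => (monomial d (1 : K))) '' ((fun e => e - ε) '' S)) := by
  ext g
  rw [Ideal.mem_colon_span_singleton, mem_span_monomials, mem_span_monomials]
  constructor
  · intro h d hd
    have hd' : d + ε ∈ (g * monomial ε 1).support := by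
      rw [MvPolynomial.mem_support_iff, MvPolynomial.coeff_mul_monomial, mul_one]
      exact MvPolynomial.mem_support_iff.mp hd
    obtain ⟨e, heS, he⟩ := h _ hd'
    exact ⟨e - ε, ⟨e, heS, rfl⟩, tsub_le_iff_right.mpr he⟩
  · intro h d hd
    rw [MvPolynomial.mem_support_iff, MvPolynomial.coeff_mul_monomial'] at hd
    by_cases hle : ε ≤ d
    · rw [if_pos hle, mul_one] at hd
      obtain ⟨e', ⟨e, heS, rfl⟩, he⟩ := h (d - ε) (MvPolynomial.mem_support_iff.mpr hd)
      refine ⟨e, heS, ?_⟩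
      calc e ≤ e - ε + ε := le_tsub_add
        _ ≤ d - ε + ε := add_le_add_left he ε
        _ = d := tsub_add_cancel_of_le hle
    · rw [if_neg hle] at hd
      exact absurd rfl hd

/-- A strict chain of primes all containing `J` gives a lower bound on the dimension of `R ⧸ J`. -/
lemma length_le_dim_quot {R : Type*} [CommRing R] (J : Ideal R)
    (q : LTSeries (PrimeSpectrum R)) (h : ∀ i, J ≤ (q i).asIdeal) :
    (q.length : WithBot ℕ∞) ≤ ringKrullDim (R ⧸ J) := by
  have hsurj : Function.Surjective (Ideal.Quotient.mk J) := Ideal.Quotient.mk_surjective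
  have hker : RingHom.ker (Ideal.Quotient.mk J) = J := Ideal.mk_ker
  let F : Fin (q.length + 1) → PrimeSpectrum (R ⧸ J) := fun i =>
    ⟨Ideal.map (Ideal.Quotient.mk J) (q i).asIdeal,
      Ideal.map_isPrime_of_surjective hsurj (by rw [hker]; exact h i)⟩
  have hcomap : ∀ i, Ideal.comap (Ideal.Quotient.mk J) (F i).asIdeal = (q i).asIdeal := by
    intro i
    rw [Ideal.comap_map_of_surjective _ hsurj, ← RingHom.ker_eq_comap_bot, hker,
      sup_eq_left.mpr (h i)]
  have hmono : StrictMono F := by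
    intro i j hij
    have hlt : (q i).asIdeal < (q j).asIdeal := q.strictMono hij
    refine lt_of_le_of_ne (Ideal.map_mono hlt.le) fun heq => ?_
    have : (q i).asIdeal = (q j).asIdeal := by
      rw [← hcomap i, ← hcomap j]
      exact congrArg (Ideal.comap _) (congrArg PrimeSpectrum.asIdeal heq)
    exact hlt.ne this
  have := Order.LTSeries.length_le_krullDim (LTSeries.mk q.length F hmono)
  simpa [ringKrullDim] using this

lemma dim_quot_le_of_le {R : Type*} [CommRing R] {I J : Ideal R} (h : I ≤ J) :
    ringKrullDim (R ⧸ J) ≤ ringKrullDim (R ⧸ I) := by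
  refine ringKrullDim_le_of_surjective (Ideal.Quotient.factor h) ?_
  intro y
  obtain ⟨x, rfl⟩ := Ideal.Quotient.mk_surjective y
  exact ⟨Ideal.Quotient.mk I x, rfl⟩

lemma dim_quot_eq_max {R : Type*} [CommRing R] (I : Ideal R) (f : R) :
    ringKrullDim (R ⧸ I) =
      max (ringKrullDim (R ⧸ (Submodule.colon I (Ideal.span {f}) : Ideal R)))
        (ringKrullDim (R ⧸ (I ⊔ Ideal.span {f}))) := by
  refine le_antisymm ?_ (max_le (dim_quot_le_of_le fun x hx =>
      Ideal.mem_colon_span_singleton.mpr (Ideal.mul_mem_right f I hx))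
      (dim_quot_le_of_le le_sup_left))
  rw [ringKrullDim, Order.krullDim]
  refine iSup_le fun p => ?_
  have hsurj : Function.Surjective (Ideal.Quotient.mk I) := Ideal.Quotient.mk_surjective
  have hc : StrictMono fun x : PrimeSpectrum (R ⧸ I) =>
      PrimeSpectrum.comap (Ideal.Quotient.mk I) x := by
    refine Monotone.strictMono_of_injective (fun a b hab => Ideal.comap_mono hab)
      (PrimeSpectrum.comap_injective_of_surjective _ hsurj)
  set q := p.map _ hc with hq
  have hlen : q.length = p.length := rfl
  have hI : ∀ i, I ≤ (q i).asIdeal := by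
    intro i x hx
    rw [show (q i).asIdeal = Ideal.comap (Ideal.Quotient.mk I) (p i).asIdeal from rfl,
      Ideal.mem_comap, Ideal.Quotient.eq_zero_iff_mem.mpr hx]
    exact zero_mem _
  by_cases hf : f ∈ (q 0).asIdeal
  · refine le_trans ?_ (le_max_right _ _)
    rw [← hlen]
    refine length_le_dim_quot _ q fun i => sup_le (hI i) ?_
    rw [Ideal.span_le, Set.singleton_subset_iff]
    exact (q.monotone (Fin.zero_le i)) hf
  · refine le_trans ?_ (le_max_left _ _)
    rw [← hlen]
    refine length_le_dim_quot _ q fun i => le_trans ?_ (q.monotone (Fin.zero_le i))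
    intro g hg
    have hgf : g * f ∈ I := Ideal.mem_colon_span_singleton.mp hg
    rcases (q 0).isPrime.mem_or_mem (hI 0 hgf) with h | h
    · exact h
    · exact absurd h hf

end Aux

theorem stmt_1 {K : Type*} [Field K] {n : ℕ} (I : Ideal (MvPolynomial (Fin n) K))
    (f : MvPolynomial (Fin n) K) (hI : IsMonomialIdeal I) (hf : IsMonomial f) :
    IsMonomialIdeal (Submodule.colon I (Ideal.span {f})) ∧
      ringKrullDim (MvPolynomial (Fin n) K ⧸ I) =
        max (ringKrullDim (MvPolynomial (Fin n) K ⧸ (Submodule.colon I (Ideal.span {f}) : Ideal (MvPolynomial (Fin n) K))))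
          (ringKrullDim (MvPolynomial (Fin n) K ⧸ (I ⊔ Ideal.span {f}))) := by
  obtain ⟨S, hS, rfl⟩ := hI
  obtain ⟨ε, rfl⟩ := hf
  have hSeq : S = (fun d => monomial d (1 : K)) '' {d | monomial d (1 : K) ∈ S} := by
    ext g
    constructor
    · intro hg
      obtain ⟨d, rfl⟩ := hS g hg
      exact ⟨d, hg, rfl⟩
    · rintro ⟨d, hd, rfl⟩
      exact hd
  constructor
  · rw [hSeq, colon_span_monomials]
    exact ⟨_, by rintro f ⟨d, _, rfl⟩; exact ⟨d, rfl⟩, rfl⟩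
  · exact dim_quot_eq_max _ _

end
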